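/- arXiv:1804.09341 — 9 statements merged into one kernel-verified Lean document; each statement's English description precedes it below -/
import Mathlib

section
/- Let A be an MDP and H a convex set of probability distributions. Suppose x, y ∈ H and there exist one-step MDP strategies τ_x, τ_y with x·M_{τ_x} ∈ H and y·M_{τ_y} ∈ H. Then for every λ ∈ [0,1] and z = λx + (1-λ)y there exists a one-step MDP strategy τ_z with z·M_{τ_z} ∈ H. -/
open scoped BigOperators

/-- An `n × n` real matrix is row-stochastic if all entries are nonnegative
and each row sums to `1`. -/
def RowStochastic {n : ℕ} (M : Matrix (Fin n) (Fin n) ℝ) : Prop :=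
  (∀ i j, 0 ≤ M i j) ∧ ∀ i, ∑ j, M i j = 1

/-- A probability distribution on `n` states. -/
def IsDist {n : ℕ} (Δ : Fin n → ℝ) : Prop :=
  (∀ i, 0 ≤ Δ i) ∧ ∑ i, Δ i = 1

/-- A one-step MDP strategy: each state gets a probability distribution over actions. -/
def IsMDPStrategy {n : ℕ} {A : Type} [Fintype A] (τ : A → Fin n → ℝ) : Prop :=
  (∀ α i, 0 ≤ τ α i) ∧ ∀ i, ∑ α, τ α i = 1

/-- The stochastic matrix induced by a one-step MDP strategy. -/
noncomputable def stratMatrix {n : ℕ} {A : Type} [Fintype A]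
    (M : A → Matrix (Fin n) (Fin n) ℝ) (τ : A → Fin n → ℝ) :
    Matrix (Fin n) (Fin n) ℝ :=
  fun i j => ∑ α, τ α i * M α i j

/-- The distribution reached after `m` steps applying the sequence of one-step
strategies `σ` from `Δ`. -/
noncomputable def iterDist {n : ℕ} {A : Type} [Fintype A]
    (M : A → Matrix (Fin n) (Fin n) ℝ) (σ : ℕ → A → Fin n → ℝ)
    (Δ : Fin n → ℝ) : ℕ → Fin n → ℝ
  | 0 => Δ
  | m + 1 => Matrix.vecMul (iterDist M σ Δ m) (stratMatrix M (σ m))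

/-- `Δ` admits an `H`-safe strategy. -/
def HSafe {n : ℕ} {A : Type} [Fintype A]
    (M : A → Matrix (Fin n) (Fin n) ℝ) (H : Set (Fin n → ℝ)) (Δ : Fin n → ℝ) : Prop :=
  ∃ σ : ℕ → A → Fin n → ℝ,
    (∀ m, IsMDPStrategy (σ m)) ∧ ∀ m, iterDist M σ Δ m ∈ H

/-- The winning region: distributions of `H` admitting an `H`-safe strategy. -/
def Hwin {n : ℕ} {A : Type} [Fintype A]
    (M : A → Matrix (Fin n) (Fin n) ℝ) (H : Set (Fin n → ℝ)) : Set (Fin n → ℝ) :=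
  {Δ | Δ ∈ H ∧ HSafe M H Δ}

/-- A convex polytope in H-representation: a finite intersection of half-spaces. -/
def IsPolytope {n : ℕ} (H : Set (Fin n → ℝ)) : Prop :=
  ∃ (k : ℕ) (a : Fin k → Fin n → ℝ) (b : Fin k → ℝ),
    H = {x | ∀ j, ∑ i, a j i * x i ≤ b j}

/-- A one-step PFA strategy: a probability distribution over actions. -/
def IsPFAStrategy {A : Type} [Fintype A] (τ : A → ℝ) : Prop :=
  (∀ α, 0 ≤ τ α) ∧ ∑ α, τ α = 1

/-- The stochastic matrix induced by a one-step PFA strategy. -/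
noncomputable def pfaMatrix {n : ℕ} {A : Type} [Fintype A]
    (M : A → Matrix (Fin n) (Fin n) ℝ) (τ : A → ℝ) : Matrix (Fin n) (Fin n) ℝ :=
  ∑ α, τ α • M α

theorem stmt5 {n : ℕ} {A : Type} [Fintype A]
    (M : A → Matrix (Fin n) (Fin n) ℝ) (hM : ∀ α, RowStochastic (M α))
    (H : Set (Fin n → ℝ)) (hconv : Convex ℝ H) (hHd : ∀ Δ ∈ H, IsDist Δ)
    (x y : Fin n → ℝ) (hx : x ∈ H) (hy : y ∈ H)
    (τx τy : A → Fin n → ℝ) (hτx : IsMDPStrategy τx) (hτy : IsMDPStrategy τy)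
    (hxstep : Matrix.vecMul x (stratMatrix M τx) ∈ H)
    (hystep : Matrix.vecMul y (stratMatrix M τy) ∈ H)
    (l : ℝ) (hl : l ∈ Set.Icc (0:ℝ) 1) :
    ∃ τz : A → Fin n → ℝ, IsMDPStrategy τz ∧
      Matrix.vecMul (l • x + (1 - l) • y) (stratMatrix M τz) ∈ H := by
  classical
  obtain ⟨hl0, hl1⟩ := hl
  obtain ⟨hxnn, -⟩ := hHd x hx
  obtain ⟨hynn, -⟩ := hHd y hy
  set z : Fin n → ℝ := l • x + (1 - l) • y with hz
  have hznn : ∀ i, 0 ≤ z i := fun i => by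
    have : z i = l * x i + (1 - l) * y i := by simp [hz]
    rw [this]
    have := hxnn i; have := hynn i; nlinarith
  set τz : A → Fin n → ℝ := fun α i =>
    if h : 0 < z i then (l * x i * τx α i + (1 - l) * y i * τy α i) / z i
    else τx α i with hτzdef
  have hzi : ∀ i α, z i * τz α i = l * x i * τx α i + (1 - l) * y i * τy α i := by
    intro i α
    by_cases h : 0 < z i
    · simp only [hτzdef, dif_pos h]
      field_simp
    · have hz0 : z i = 0 := le_antisymm (not_lt.mp h) (hznn i)
      have hzsum : l * x i + (1 - l) * y i = 0 := by
        have : z i = l * x i + (1 - l) * y i := by simp [hz]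
        linarith [this ▸ hz0]
      have h1 : 0 ≤ l * x i := mul_nonneg hl0 (hxnn i)
      have h2 : 0 ≤ (1 - l) * y i := mul_nonneg (by linarith) (hynn i)
      have hx0 : l * x i = 0 := by linarith
      have hy0 : (1 - l) * y i = 0 := by linarith
      rw [hz0, hx0, hy0]
      ring
  refine ⟨τz, ⟨?_, ?_⟩, ?_⟩
  · intro α i
    by_cases h : 0 < z i
    · simp only [hτzdef, dif_pos h]
      apply div_nonneg _ (le_of_lt h)
      have h1 := mul_nonneg (mul_nonneg hl0 (hxnn i)) (hτx.1 α i)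
      have h2 := mul_nonneg (mul_nonneg (by linarith : (0:ℝ) ≤ 1 - l) (hynn i)) (hτy.1 α i)
      linarith
    · simp only [hτzdef, dif_neg h]
      exact hτx.1 α i
  · intro i
    by_cases h : 0 < z i
    · simp only [hτzdef, dif_pos h]
      rw [← Finset.sum_div]
      have hsum : ∑ α, (l * x i * τx α i + (1 - l) * y i * τy α i) = z i := by
        rw [Finset.sum_add_distrib, ← Finset.mul_sum, ← Finset.mul_sum, hτx.2 i, hτy.2 i]
        simp [hz]
      rw [hsum, div_self (ne_of_gt h)]
    · simp only [hτzdef, dif_neg h]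
      exact hτx.2 i
  · have key : Matrix.vecMul z (stratMatrix M τz)
        = l • Matrix.vecMul x (stratMatrix M τx) + (1 - l) • Matrix.vecMul y (stratMatrix M τy) := by
      funext j
      simp only [Matrix.vecMul, dotProduct, stratMatrix, Pi.add_apply, Pi.smul_apply,
        smul_eq_mul]
      rw [Finset.mul_sum, Finset.mul_sum, ← Finset.sum_add_distrib]
      refine Finset.sum_congr rfl fun i _ => ?_
      rw [Finset.mul_sum]
      calc ∑ α, z i * (τz α i * M α i j)
          = ∑ α, (l * (x i * (τx α i * M α i j)) + (1 - l) * (y i * (τy α i * M α i j))) := by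
            refine Finset.sum_congr rfl fun α _ => ?_
            rw [← mul_assoc, hzi]; ring
        _ = _ := by
            rw [Finset.sum_add_distrib, ← Finset.mul_sum, ← Finset.mul_sum, ← Finset.mul_sum,
              ← Finset.mul_sum]
    show Matrix.vecMul z (stratMatrix M τz) ∈ H
    rw [key]
    exact hconv hxstep hystep hl0 (by linarith) (by ring)
end

section
/- Let A be an MDP and H a closed convex set of probability distributions. If x, y ∈ H admit H-safe strategies (infinite sequences of one-step strategies keeping the distribution in H forever), then every convex combination z = λx + (1-λ)y with λ ∈ [0,1] also admits an H-safe strategy. -/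
open scoped BigOperators

theorem stmt6 {n : ℕ} {A : Type} [Fintype A]
    (M : A → Matrix (Fin n) (Fin n) ℝ) (hM : ∀ α, RowStochastic (M α))
    (H : Set (Fin n → ℝ)) (hclosed : IsClosed H) (hconv : Convex ℝ H)
    (hHd : ∀ Δ ∈ H, IsDist Δ)
    (x y : Fin n → ℝ) (hx : x ∈ H) (hy : y ∈ H)
    (hsx : HSafe M H x) (hsy : HSafe M H y)
    (l : ℝ) (hl : l ∈ Set.Icc (0:ℝ) 1) :
    HSafe M H (l • x + (1 - l) • y) := by
  classical
  obtain ⟨hl0, hl1⟩ := hl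
  obtain ⟨σx, hσxS, hσxH⟩ := hsx
  obtain ⟨σy, hσyS, hσyH⟩ := hsy
  set xd := iterDist M σx x with hxd
  set yd := iterDist M σy y with hyd
  have hxdist : ∀ m i, 0 ≤ xd m i := fun m i => (hHd _ (hσxH m)).1 i
  have hydist : ∀ m i, 0 ≤ yd m i := fun m i => (hHd _ (hσyH m)).1 i
  set z : ℕ → Fin n → ℝ := fun m i => l * xd m i + (1 - l) * yd m i with hz
  set σ : ℕ → A → Fin n → ℝ := fun m α i =>
    if z m i = 0 then σx m α i
    else (l * xd m i * σx m α i + (1 - l) * yd m i * σy m α i) / z m i with hσ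
  have hznn : ∀ m i, 0 ≤ z m i := fun m i =>
    add_nonneg (mul_nonneg hl0 (hxdist m i))
      (mul_nonneg (by linarith) (hydist m i))
  have hkey : ∀ m α i, z m i * σ m α i =
      l * xd m i * σx m α i + (1 - l) * yd m i * σy m α i := by
    intro m α i
    by_cases h : z m i = 0
    · have ha : 0 ≤ l * xd m i := mul_nonneg hl0 (hxdist m i)
      have hb : 0 ≤ (1 - l) * yd m i :=
        mul_nonneg (by linarith) (hydist m i)
      have h' : l * xd m i + (1 - l) * yd m i = 0 := h
      have h1 : l * xd m i = 0 := by linarith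
      have h2 : (1 - l) * yd m i = 0 := by linarith
      simp [hσ, h, h1, h2]
    · simp only [hσ, if_neg h]
      field_simp
  have hσS : ∀ m, IsMDPStrategy (σ m) := by
    intro m
    constructor
    · intro α i
      by_cases h : z m i = 0
      · simpa [hσ, h] using (hσxS m).1 α i
      · have hz' : 0 < z m i := lt_of_le_of_ne (hznn m i) (Ne.symm h)
        simp only [hσ, if_neg h]
        apply div_nonneg _ hz'.le
        exact add_nonneg
          (mul_nonneg (mul_nonneg hl0 (hxdist m i)) ((hσxS m).1 α i))
          (mul_nonneg (mul_nonneg (by linarith) (hydist m i)) ((hσyS m).1 α i))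
    · intro i
      by_cases h : z m i = 0
      · simpa [hσ, h] using (hσxS m).2 i
      · have hmul : z m i * ∑ α, σ m α i = z m i := by
          rw [Finset.mul_sum]
          calc ∑ α, z m i * σ m α i
              = ∑ α, (l * xd m i * σx m α i + (1 - l) * yd m i * σy m α i) :=
                Finset.sum_congr rfl fun α _ => hkey m α i
            _ = l * xd m i * (∑ α, σx m α i) + (1 - l) * yd m i * (∑ α, σy m α i) := by
                rw [Finset.sum_add_distrib, ← Finset.mul_sum, ← Finset.mul_sum]
            _ = z m i := by rw [(hσxS m).2 i, (hσyS m).2 i]; simp [hz]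
        exact mul_left_cancel₀ h (by rw [hmul, mul_one])
  have hiter : ∀ m, iterDist M σ (l • x + (1 - l) • y) m = z m := by
    intro m
    induction m with
    | zero =>
      funext i
      simp only [iterDist, hz, Pi.add_apply, Pi.smul_apply, smul_eq_mul]
      rfl
    | succ m ih =>
      funext j
      show Matrix.vecMul (iterDist M σ (l • x + (1 - l) • y) m)
        (stratMatrix M (σ m)) j = z (m + 1) j
      rw [ih]
      have hxs : xd (m + 1) j = ∑ i, xd m i * ∑ α, σx m α i * M α i j := by
        simp [hxd, iterDist, Matrix.vecMul, dotProduct, stratMatrix]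
      have hys : yd (m + 1) j = ∑ i, yd m i * ∑ α, σy m α i * M α i j := by
        simp [hyd, iterDist, Matrix.vecMul, dotProduct, stratMatrix]
      have hi : ∀ i, z m i * (∑ α, σ m α i * M α i j)
          = l * (xd m i * ∑ α, σx m α i * M α i j)
            + (1 - l) * (yd m i * ∑ α, σy m α i * M α i j) := by
        intro i
        calc z m i * (∑ α, σ m α i * M α i j)
            = ∑ α, z m i * σ m α i * M α i j := by
              rw [Finset.mul_sum]
              exact Finset.sum_congr rfl fun α _ => by ring
          _ = ∑ α, (l * (xd m i * (σx m α i * M α i j))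
                + (1 - l) * (yd m i * (σy m α i * M α i j))) := by
              refine Finset.sum_congr rfl fun α _ => ?_
              rw [hkey m α i]; ring
          _ = l * (xd m i * ∑ α, σx m α i * M α i j)
                + (1 - l) * (yd m i * ∑ α, σy m α i * M α i j) := by
              rw [Finset.sum_add_distrib, ← Finset.mul_sum, ← Finset.mul_sum,
                ← Finset.mul_sum, ← Finset.mul_sum]
      have hlhs : Matrix.vecMul (z m) (stratMatrix M (σ m)) j
          = ∑ i, z m i * (∑ α, σ m α i * M α i j) := by
        simp [Matrix.vecMul, dotProduct, stratMatrix]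
      rw [hlhs]
      have : z (m + 1) j = l * xd (m + 1) j + (1 - l) * yd (m + 1) j := rfl
      rw [this, hxs, hys, Finset.mul_sum, Finset.mul_sum, ← Finset.sum_add_distrib]
      exact Finset.sum_congr rfl fun i _ => hi i
  refine ⟨σ, hσS, fun m => ?_⟩
  rw [hiter m]
  have hzeq : z m = l • xd m + (1 - l) • yd m := by
    funext i; simp [hz]
  rw [hzeq]
  exact hconv (hσxH m) (hσyH m) hl0 (by linarith) (by ring)
end

section
/- For an MDP A and convex closed set of distributions H, the set H_win of distributions Δ ∈ H admitting an H-safe strategy is convex. -/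
open scoped BigOperators

theorem stmt7 {n : ℕ} {A : Type} [Fintype A]
    (M : A → Matrix (Fin n) (Fin n) ℝ) (hM : ∀ α, RowStochastic (M α))
    (H : Set (Fin n → ℝ)) (hclosed : IsClosed H) (hconv : Convex ℝ H)
    (hHd : ∀ Δ ∈ H, IsDist Δ) :
    Convex ℝ (Hwin M H) := by
  intro x hx y hy a b ha hb hab
  rcases eq_or_lt_of_le ha with ha0 | ha
  · have hb1 : b = 1 := by linarith
    simpa [← ha0, hb1] using hy
  rcases eq_or_lt_of_le hb with hb0 | hb
  · have ha1 : a = 1 := by linarith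
    simpa [← hb0, ha1] using hx
  obtain ⟨hxH, σ₁, hσ₁, hD₁⟩ := hx
  obtain ⟨hyH, σ₂, hσ₂, hD₂⟩ := hy
  set D₁ := iterDist M σ₁ x with hD₁def
  set D₂ := iterDist M σ₂ y with hD₂def
  have hD₁n : ∀ m i, 0 ≤ D₁ m i := fun m i => (hHd _ (hD₁ m)).1 i
  have hD₂n : ∀ m i, 0 ≤ D₂ m i := fun m i => (hHd _ (hD₂ m)).1 i
  set σ : ℕ → A → Fin n → ℝ := fun m α i =>
    if a * D₁ m i + b * D₂ m i = 0 then σ₁ m α i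
    else (a * D₁ m i * σ₁ m α i + b * D₂ m i * σ₂ m α i) / (a * D₁ m i + b * D₂ m i)
    with hσdef
  have hden : ∀ m i, 0 ≤ a * D₁ m i + b * D₂ m i := fun m i =>
    add_nonneg (mul_nonneg ha.le (hD₁n m i)) (mul_nonneg hb.le (hD₂n m i))
  have key : ∀ m α i, (a * D₁ m i + b * D₂ m i) * σ m α i
      = a * D₁ m i * σ₁ m α i + b * D₂ m i * σ₂ m α i := by
    intro m α i
    by_cases h : a * D₁ m i + b * D₂ m i = 0
    · have h1 : a * D₁ m i = 0 := by nlinarith [hD₁n m i, hD₂n m i]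
      have h2 : b * D₂ m i = 0 := by nlinarith [hD₁n m i, hD₂n m i]
      simp [hσdef, h, h1, h2]
    · simp only [hσdef, if_neg h]
      field_simp
  have hσstrat : ∀ m, IsMDPStrategy (σ m) := by
    intro m
    constructor
    · intro α i
      by_cases h : a * D₁ m i + b * D₂ m i = 0
      · simpa [hσdef, h] using (hσ₁ m).1 α i
      · have hpos : 0 < a * D₁ m i + b * D₂ m i := lt_of_le_of_ne (hden m i) (Ne.symm h)
        simp only [hσdef, if_neg h]
        exact div_nonneg (add_nonneg (mul_nonneg (mul_nonneg ha.le (hD₁n m i)) ((hσ₁ m).1 α i))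
          (mul_nonneg (mul_nonneg hb.le (hD₂n m i)) ((hσ₂ m).1 α i))) hpos.le
    · intro i
      by_cases h : a * D₁ m i + b * D₂ m i = 0
      · simpa [hσdef, h] using (hσ₁ m).2 i
      · simp only [hσdef, if_neg h]
        rw [← Finset.sum_div, div_eq_one_iff_eq h]
        rw [Finset.sum_add_distrib, ← Finset.mul_sum, ← Finset.mul_sum, (hσ₁ m).2 i, (hσ₂ m).2 i]
        ring
  have hiter : ∀ m, iterDist M σ (a • x + b • y) m = a • D₁ m + b • D₂ m := by
    intro m
    induction m with
    | zero => rfl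
    | succ m ih =>
      funext j
      show Matrix.vecMul (iterDist M σ (a • x + b • y) m) (stratMatrix M (σ m)) j = _
      rw [ih]
      show ∑ i, (a • D₁ m + b • D₂ m) i * stratMatrix M (σ m) i j = _
      have h1 : (a • D₁ (m+1) + b • D₂ (m+1)) j
          = a * (∑ i, D₁ m i * stratMatrix M (σ₁ m) i j)
            + b * (∑ i, D₂ m i * stratMatrix M (σ₂ m) i j) := rfl
      rw [h1, Finset.mul_sum, Finset.mul_sum, ← Finset.sum_add_distrib]
      refine Finset.sum_congr rfl fun i _ => ?_
      simp only [Pi.add_apply, Pi.smul_apply, smul_eq_mul, stratMatrix]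
      rw [Finset.mul_sum, Finset.mul_sum, Finset.mul_sum, Finset.mul_sum, Finset.mul_sum,
        ← Finset.sum_add_distrib]
      refine Finset.sum_congr rfl fun α _ => ?_
      linear_combination M α i j * key m α i
  refine ⟨hconv hxH hyH ha.le hb.le hab, σ, hσstrat, fun m => ?_⟩
  rw [hiter m]
  exact hconv (hD₁ m) (hD₂ m) ha.le hb.le hab
end

section
/- For an MDP A and a closed set of distributions H contained in the probability simplex, H_win is a compact subset of ℝ^n. -/
open scoped BigOperators

lemma contIter {n : ℕ} {A : Type} [Fintype A]
    (M : A → Matrix (Fin n) (Fin n) ℝ) (m : ℕ) :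
    Continuous (fun p : (Fin n → ℝ) × (ℕ → A → Fin n → ℝ) => iterDist M p.2 p.1 m) := by
  induction m with
  | zero => exact continuous_fst
  | succ m ih =>
    simp only [iterDist]
    apply continuous_pi; intro j
    simp only [Matrix.vecMul, dotProduct, stratMatrix]
    apply continuous_finset_sum; intro i _
    apply Continuous.mul ((continuous_apply i).comp ih)
    apply continuous_finset_sum; intro α _
    exact Continuous.mul
      ((continuous_apply i).comp ((continuous_apply α).comp
        ((continuous_apply m).comp continuous_snd))) continuous_const

theorem stmt8 {n : ℕ} {A : Type} [Fintype A]
    (M : A → Matrix (Fin n) (Fin n) ℝ) (hM : ∀ α, RowStochastic (M α))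
    (H : Set (Fin n → ℝ)) (hclosed : IsClosed H)
    (hHd : ∀ Δ ∈ H, IsDist Δ) :
    IsCompact (Hwin M H) := by
  classical
  set P := (Fin n → ℝ) × (ℕ → A → Fin n → ℝ)
  set Box : Set (Fin n → ℝ) := Set.univ.pi (fun _ => Set.Icc (0:ℝ) 1) with hBoxdef
  set SBox : Set (ℕ → A → Fin n → ℝ) :=
    Set.univ.pi (fun _ : ℕ => Set.univ.pi (fun _ : A =>
      Set.univ.pi (fun _ : Fin n => Set.Icc (0:ℝ) 1))) with hSBoxdef
  have hBoxC : IsCompact Box := isCompact_univ_pi (fun _ => isCompact_Icc)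
  have hSBoxC : IsCompact SBox :=
    isCompact_univ_pi (fun _ => isCompact_univ_pi (fun _ =>
      isCompact_univ_pi (fun _ => isCompact_Icc)))
  set K : Set P :=
    {p | (∀ m, IsMDPStrategy (p.2 m)) ∧ ∀ m, iterDist M p.2 p.1 m ∈ H} with hKdef
  have hKsub : K ⊆ Box ×ˢ SBox := by
    rintro ⟨Δ, σ⟩ ⟨hstrat, hsafe⟩
    constructor
    · have hΔH : Δ ∈ H := by simpa [iterDist] using hsafe 0
      obtain ⟨hnn, hsum⟩ := hHd Δ hΔH
      intro i _
      refine ⟨hnn i, ?_⟩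
      calc Δ i ≤ ∑ j, Δ j :=
            Finset.single_le_sum (fun j _ => hnn j) (Finset.mem_univ i)
        _ = 1 := hsum
    · intro m _
      obtain ⟨hnn, hsum⟩ := hstrat m
      intro α _ i _
      refine ⟨hnn α i, ?_⟩
      calc σ m α i ≤ ∑ β, σ m β i :=
            Finset.single_le_sum (fun β _ => hnn β i) (Finset.mem_univ α)
        _ = 1 := hsum i
  have hKclosed : IsClosed K := by
    have : K = ((⋂ m, ⋂ α, ⋂ i, {p : P | 0 ≤ p.2 m α i}) ∩
        (⋂ m, ⋂ i, {p : P | ∑ α, p.2 m α i = 1})) ∩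
        (⋂ m, (fun p : P => iterDist M p.2 p.1 m) ⁻¹' H) := by
      ext p
      simp only [hKdef, Set.mem_setOf_eq, Set.mem_inter_iff, Set.mem_iInter,
        Set.mem_preimage, IsMDPStrategy, forall_and]
    rw [this]
    refine IsClosed.inter (IsClosed.inter ?_ ?_) ?_
    · refine isClosed_iInter fun m => isClosed_iInter fun α => isClosed_iInter fun i => ?_
      exact isClosed_le continuous_const
        ((continuous_apply i).comp ((continuous_apply α).comp
          ((continuous_apply m).comp continuous_snd)))
    · refine isClosed_iInter fun m => isClosed_iInter fun i => ?_
      refine isClosed_eq ?_ continuous_const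
      exact continuous_finset_sum _ fun α _ =>
        (continuous_apply i).comp ((continuous_apply α).comp
          ((continuous_apply m).comp continuous_snd))
    · exact isClosed_iInter fun m => hclosed.preimage (contIter M m)
  have hKcomp : IsCompact K := (hBoxC.prod hSBoxC).of_isClosed_subset hKclosed hKsub
  have himg : Hwin M H = Prod.fst '' K := by
    ext Δ
    constructor
    · rintro ⟨hΔH, σ, hstrat, hsafe⟩
      exact ⟨(Δ, σ), ⟨hstrat, hsafe⟩, rfl⟩
    · rintro ⟨⟨Δ', σ⟩, ⟨hstrat, hsafe⟩, rfl⟩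
      refine ⟨by simpa [iterDist] using hsafe 0, σ, hstrat, hsafe⟩
  rw [himg]
  exact hKcomp.image continuous_fst
end

section
/- Let A be an MDP and H a closed convex polytope of distributions. Then H_win ≠ ∅ if and only if there exists a distribution Δ ∈ H and a one-step MDP strategy τ with Δ·M_τ = Δ. -/
open scoped BigOperators
open Filter Topology

/-- Unfolding `vecMul` through `stratMatrix`. -/
lemma vecMul_strat_apply {n : ℕ} {A : Type} [Fintype A]
    (M : A → Matrix (Fin n) (Fin n) ℝ) (v : Fin n → ℝ) (t : A → Fin n → ℝ) (j : Fin n) :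
    Matrix.vecMul v (stratMatrix M t) j = ∑ i, ∑ α, v i * (t α i * M α i j) := by
  simp [Matrix.vecMul, dotProduct, stratMatrix, Finset.mul_sum]

set_option maxHeartbeats 1000000 in
theorem stmt10 {n : ℕ} {A : Type} [Fintype A]
    (M : A → Matrix (Fin n) (Fin n) ℝ) (hM : ∀ α, RowStochastic (M α))
    (H : Set (Fin n → ℝ)) (hpoly : IsPolytope H) (hHd : ∀ Δ ∈ H, IsDist Δ) :
    (Hwin M H).Nonempty ↔
      ∃ Δ ∈ H, ∃ τ : A → Fin n → ℝ, IsMDPStrategy τ ∧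
        Matrix.vecMul Δ (stratMatrix M τ) = Δ := by
  constructor
  · rintro ⟨Δ₀, hΔ₀H, σ, hσ, hiter⟩
    obtain ⟨kp, a, b, hHeq⟩ := hpoly
    set D : ℕ → Fin n → ℝ := iterDist M σ Δ₀ with hDdef
    have hD : ∀ m, D m ∈ H := hiter
    have hDnn : ∀ m i, 0 ≤ D m i := fun m i => (hHd _ (hD m)).1 i
    have hDle : ∀ m i, D m i ≤ 1 := by
      intro m i
      have h := hHd _ (hD m)
      calc D m i ≤ ∑ i', D m i' :=
            Finset.single_le_sum (fun i' _ => h.1 i') (Finset.mem_univ i)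
        _ = 1 := h.2
    set T : ℕ → Fin n → ℝ := fun m i => ∑ k ∈ Finset.range (m+1), D k i with hTdef
    set S : ℕ → A → Fin n → ℝ :=
      fun m α i => ∑ k ∈ Finset.range (m+1), D k i * σ k α i with hSdef
    set C : ℕ → Fin n → ℝ := fun m i => T m i / (m+1) with hCdef
    set τs : ℕ → A → Fin n → ℝ :=
      fun m α i => if T m i = 0 then σ 0 α i else S m α i / T m i with hτdef
    have hmpos : ∀ m : ℕ, (0:ℝ) < (m:ℝ)+1 := fun m => by positivity
    have hTnn : ∀ m i, 0 ≤ T m i := fun m i => Finset.sum_nonneg fun k _ => hDnn k i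
    have hSnn : ∀ m α i, 0 ≤ S m α i :=
      fun m α i => Finset.sum_nonneg fun k _ => mul_nonneg (hDnn k i) ((hσ k).1 α i)
    have hSsum : ∀ m i, ∑ α, S m α i = T m i := by
      intro m i
      simp only [hSdef, hTdef]
      rw [Finset.sum_comm]
      refine Finset.sum_congr rfl fun k _ => ?_
      rw [← Finset.mul_sum, (hσ k).2 i, mul_one]
    have hTzero : ∀ m i, T m i = 0 → ∀ k ∈ Finset.range (m+1), D k i = 0 := by
      intro m i h k hk
      exact (Finset.sum_eq_zero_iff_of_nonneg (fun k _ => hDnn k i)).1 h k hk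
    have hSzero : ∀ m α i, T m i = 0 → S m α i = 0 := by
      intro m α i h
      simp only [hSdef]
      exact Finset.sum_eq_zero fun k hk => by rw [hTzero m i h k hk, zero_mul]
    have hτstrat : ∀ m, IsMDPStrategy (τs m) := by
      intro m
      constructor
      · intro α i
        simp only [hτdef]
        split
        · exact (hσ 0).1 α i
        · exact div_nonneg (hSnn m α i) (hTnn m i)
      · intro i
        simp only [hτdef]
        by_cases h : T m i = 0
        · simp only [h, if_pos rfl, if_true]
          exact (hσ 0).2 i
        · simp only [if_neg h]
          rw [← Finset.sum_div, hSsum m i, div_self h]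
    have hCτ : ∀ m α i, C m i * τs m α i = S m α i / (m+1) := by
      intro m α i
      by_cases h : T m i = 0
      · simp only [hCdef, hτdef, h, hSzero m α i h, zero_div, zero_mul]
      · simp only [hCdef, hτdef, if_neg h]
        field_simp
    have hCnn : ∀ m i, 0 ≤ C m i := fun m i => div_nonneg (hTnn m i) (hmpos m).le
    have hCle : ∀ m i, C m i ≤ 1 := by
      intro m i
      rw [hCdef, div_le_one (hmpos m)]
      calc T m i ≤ ∑ k ∈ Finset.range (m+1), 1 :=
            Finset.sum_le_sum fun k _ => hDle k i
        _ = (m:ℝ)+1 := by simp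
    have hτnn : ∀ m α i, 0 ≤ τs m α i := fun m => (hτstrat m).1
    have hτle : ∀ m α i, τs m α i ≤ 1 := by
      intro m α i
      have := (hτstrat m).2 i
      calc τs m α i ≤ ∑ α', τs m α' i :=
            Finset.single_le_sum (fun α' _ => hτnn m α' i) (Finset.mem_univ α)
        _ = 1 := this
    have hCH : ∀ m, C m ∈ H := by
      intro m
      rw [hHeq]
      intro j
      have hDj : ∀ k, ∑ i, a j i * D k i ≤ b j := by
        intro k
        have := hD k
        rw [hHeq] at this
        exact this j
      have : ∑ i, a j i * C m i = (∑ k ∈ Finset.range (m+1), ∑ i, a j i * D k i) / (m+1) := by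
        simp only [hCdef, hTdef, ← mul_div_assoc, ← Finset.sum_div, Finset.mul_sum]
        rw [Finset.sum_comm]
      rw [this, div_le_iff₀ (hmpos m)]
      calc (∑ k ∈ Finset.range (m+1), ∑ i, a j i * D k i)
          ≤ ∑ k ∈ Finset.range (m+1), b j := Finset.sum_le_sum fun k _ => hDj k
        _ = ((m:ℝ)+1) * b j := by simp [mul_comm]
        _ = b j * ((m:ℝ)+1) := by ring
    -- the key almost-fixed-point identity
    have key : ∀ m j, Matrix.vecMul (C m) (stratMatrix M (τs m)) j
        = C m j + (D (m+1) j - D 0 j) / (m+1) := by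
      intro m j
      rw [vecMul_strat_apply]
      have step1 : ∀ i α, C m i * (τs m α i * M α i j) = (S m α i * M α i j) / (m+1) := by
        intro i α
        rw [← mul_assoc, hCτ m α i, div_mul_eq_mul_div]
      have hD1 : ∀ k, D (k+1) j = ∑ i, ∑ α, D k i * σ k α i * M α i j := by
        intro k
        have h : D (k+1) j = Matrix.vecMul (D k) (stratMatrix M (σ k)) j := rfl
        rw [h, vecMul_strat_apply]
        exact Finset.sum_congr rfl fun i _ => Finset.sum_congr rfl fun α _ => by ring
      have step2 : (∑ i, ∑ α, C m i * (τs m α i * M α i j))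
          = (∑ k ∈ Finset.range (m+1), D (k+1) j) / (m+1) := by
        simp only [step1, hD1, hSdef, Finset.sum_mul, ← Finset.sum_div]
        congr 1
        rw [show (∑ i, ∑ α, ∑ k ∈ Finset.range (m+1), D k i * σ k α i * M α i j)
              = ∑ i, ∑ k ∈ Finset.range (m+1), ∑ α, D k i * σ k α i * M α i j from
            Finset.sum_congr rfl fun i _ => Finset.sum_comm]
        exact Finset.sum_comm
      rw [step2]
      have tele : (∑ k ∈ Finset.range (m+1), D (k+1) j)
          = T m j + (D (m+1) j - D 0 j) := by
        simp only [hTdef]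
        have h1 : ∑ k ∈ Finset.range (m+1+1), D k j
            = (∑ k ∈ Finset.range (m+1), D k j) + D (m+1) j := Finset.sum_range_succ _ _
        have h2 : ∑ k ∈ Finset.range (m+1+1), D k j
            = D 0 j + ∑ k ∈ Finset.range (m+1), D (k+1) j := by
          rw [Finset.sum_range_succ' (fun k => D k j) (m+1)]
          ring
        linarith
      rw [tele, hCdef]
      ring
    -- compactness: extract a convergent subsequence of (C m, τs m)
    set p : ℕ → (Fin n → ℝ) × (A → Fin n → ℝ) := fun m => (C m, τs m) with hpdef
    have hp : ∀ m, p m ∈ Set.Icc ((fun _ => 0, fun _ _ => 0) : (Fin n → ℝ) × (A → Fin n → ℝ))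
        (fun _ => 1, fun _ _ => 1) := by
      intro m
      constructor
      · exact ⟨fun i => hCnn m i, fun α i => hτnn m α i⟩
      · exact ⟨fun i => hCle m i, fun α i => hτle m α i⟩
    obtain ⟨⟨Cl, τl⟩, -, φ, hφ, hlim⟩ := isCompact_Icc.tendsto_subseq hp
    have hClim : Tendsto (fun k => C (φ k)) atTop (𝓝 Cl) :=
      (continuous_fst.tendsto _).comp hlim
    have hτlim : Tendsto (fun k => τs (φ k)) atTop (𝓝 τl) :=
      (continuous_snd.tendsto _).comp hlim
    have hClimi : ∀ i, Tendsto (fun k => C (φ k) i) atTop (𝓝 (Cl i)) :=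
      fun i => ((continuous_apply i).tendsto _).comp hClim
    have hτlimi : ∀ α i, Tendsto (fun k => τs (φ k) α i) atTop (𝓝 (τl α i)) := by
      intro α i
      have h1 := (tendsto_pi_nhds.mp hτlim) α
      exact (tendsto_pi_nhds.mp h1) i
    refine ⟨Cl, ?_, τl, ⟨?_, ?_⟩, ?_⟩
    · -- Cl ∈ H
      rw [hHeq]
      intro j
      have hcont : Continuous fun x : Fin n → ℝ => ∑ i, a j i * x i :=
        continuous_finset_sum _ fun i _ => (continuous_const.mul (continuous_apply i))
      have h1 : Tendsto (fun k => ∑ i, a j i * C (φ k) i) atTop (𝓝 (∑ i, a j i * Cl i)) :=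
        (hcont.tendsto _).comp hClim
      refine le_of_tendsto h1 (Filter.Eventually.of_forall fun k => ?_)
      have := hCH (φ k)
      rw [hHeq] at this
      exact this j
    · -- τl nonneg
      intro α i
      exact ge_of_tendsto (hτlimi α i) (Filter.Eventually.of_forall fun k => hτnn (φ k) α i)
    · -- τl rows sum to 1
      intro i
      have h1 : Tendsto (fun k => ∑ α, τs (φ k) α i) atTop (𝓝 (∑ α, τl α i)) :=
        tendsto_finset_sum _ fun α _ => hτlimi α i
      have h2 : (fun k => ∑ α, τs (φ k) α i) = fun _ => (1:ℝ) :=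
        funext fun k => (hτstrat (φ k)).2 i
      rw [h2] at h1
      exact tendsto_nhds_unique h1 tendsto_const_nhds
    · -- fixed point
      funext j
      have hcont : Continuous fun q : (Fin n → ℝ) × (A → Fin n → ℝ) =>
          ∑ i, ∑ α, q.1 i * (q.2 α i * M α i j) := by
        refine continuous_finset_sum _ fun i _ => continuous_finset_sum _ fun α _ => ?_
        have h1 : Continuous fun q : (Fin n → ℝ) × (A → Fin n → ℝ) => q.1 i :=
          (continuous_apply i).comp continuous_fst
        have h2 : Continuous fun q : (Fin n → ℝ) × (A → Fin n → ℝ) => q.2 α i := by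
          have := (continuous_apply α).comp
            (continuous_snd : Continuous fun q : (Fin n → ℝ) × (A → Fin n → ℝ) => q.2)
          exact (continuous_apply i).comp this
        exact h1.mul (h2.mul continuous_const)
      have h1 : Tendsto (fun k => ∑ i, ∑ α, ((p ∘ φ) k).1 i * (((p ∘ φ) k).2 α i * M α i j))
          atTop (𝓝 (∑ i, ∑ α, Cl i * (τl α i * M α i j))) :=
        (hcont.tendsto (Cl, τl)).comp hlim
      simp only [hpdef, Function.comp] at h1
      have heq : ∀ k, (∑ i, ∑ α, C (φ k) i * (τs (φ k) α i * M α i j))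
          = C (φ k) j + (D (φ k + 1) j - D 0 j) / (φ k + 1) := by
        intro k
        rw [← vecMul_strat_apply, key]
      rw [funext heq] at h1
      have herr : Tendsto (fun k => (D (φ k + 1) j - D 0 j) / ((φ k : ℝ) + 1))
          atTop (𝓝 0) := by
        refine squeeze_zero_norm (a := fun k : ℕ => 1 / ((k:ℝ)+1)) ?_
          tendsto_one_div_add_atTop_nhds_zero_nat
        · intro k
          rw [Real.norm_eq_abs, abs_div]
          have habs : |D (φ k + 1) j - D 0 j| ≤ 1 := by
            rw [abs_sub_le_iff]
            constructor <;> [skip; skip] <;>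
              · have := hDnn (φ k + 1) j
                have := hDle (φ k + 1) j
                have := hDnn 0 j
                have := hDle 0 j
                linarith
          have hk : k ≤ φ k := hφ.le_apply
          have hφk : ((k:ℝ)+1) ≤ ((φ k : ℝ)+1) := by
            have : (k:ℝ) ≤ (φ k : ℝ) := Nat.cast_le.mpr hk
            linarith
          rw [abs_of_pos (hmpos (φ k))]
          exact div_le_div₀ zero_le_one habs (hmpos k) hφk
      have h2 : Tendsto (fun k => C (φ k) j + (D (φ k + 1) j - D 0 j) / ((φ k : ℝ) + 1))
          atTop (𝓝 (Cl j + 0)) := (hClimi j).add herr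
      rw [add_zero] at h2
      have := tendsto_nhds_unique h1 h2
      rw [vecMul_strat_apply]
      exact this
  · rintro ⟨Δ, hΔ, τ, hτ, hfix⟩
    refine ⟨Δ, hΔ, fun _ => τ, fun _ => hτ, ?_⟩
    have hall : ∀ m, iterDist M (fun _ => τ) Δ m = Δ := by
      intro m
      induction m with
      | zero => rfl
      | succ m ih => show Matrix.vecMul (iterDist M (fun _ => τ) Δ m) _ = Δ; rw [ih]; exact hfix
    intro m
    rw [hall m]
    exact hΔ
end

section
/- For an MDP A and convex closed polytope H, the set X = {Δ ∈ H : Δ = Δ·M_τ for some one-step MDP strategy τ} of fixed distributions is convex. -/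
open scoped BigOperators

theorem stmt11 {n : ℕ} {A : Type} [Fintype A]
    (M : A → Matrix (Fin n) (Fin n) ℝ) (hM : ∀ α, RowStochastic (M α))
    (H : Set (Fin n → ℝ)) (hpoly : IsPolytope H) (hHd : ∀ Δ ∈ H, IsDist Δ) :
    Convex ℝ {Δ | Δ ∈ H ∧ ∃ τ : A → Fin n → ℝ, IsMDPStrategy τ ∧
      Matrix.vecMul Δ (stratMatrix M τ) = Δ} := by
  rintro x ⟨hxH, τx, hτx, hfx⟩ y ⟨hyH, τy, hτy, hfy⟩ a b ha hb hab
  obtain ⟨hxnn, -⟩ := hHd x hxH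
  obtain ⟨hynn, -⟩ := hHd y hyH
  set z : Fin n → ℝ := a • x + b • y with hz
  have hzi : ∀ i, z i = a * x i + b * y i := fun i => rfl
  have hzH : z ∈ H := by
    obtain ⟨k, c, d, rfl⟩ := hpoly
    intro j
    have hsum : ∑ i, c j i * z i = a * ∑ i, c j i * x i + b * ∑ i, c j i * y i := by
      rw [Finset.mul_sum, Finset.mul_sum, ← Finset.sum_add_distrib]
      exact Finset.sum_congr rfl fun i _ => by rw [hzi]; ring
    rw [hsum]
    calc a * ∑ i, c j i * x i + b * ∑ i, c j i * y i
        ≤ a * d j + b * d j :=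
          add_le_add (mul_le_mul_of_nonneg_left (hxH j) ha)
            (mul_le_mul_of_nonneg_left (hyH j) hb)
      _ = d j := by rw [← add_mul, hab, one_mul]
  set τz : A → Fin n → ℝ := fun α i =>
    if z i = 0 then τx α i else (a * x i * τx α i + b * y i * τy α i) / z i with hτz
  have hznn : ∀ i, 0 ≤ z i := fun i => by
    rw [hzi]; exact add_nonneg (mul_nonneg ha (hxnn i)) (mul_nonneg hb (hynn i))
  have hkey : ∀ α i, z i * τz α i = a * x i * τx α i + b * y i * τy α i := by
    intro α i
    by_cases h : z i = 0
    · have h1 : a * x i + b * y i = 0 := by rw [← hzi]; exact h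
      have hax : a * x i = 0 := by nlinarith [mul_nonneg ha (hxnn i), mul_nonneg hb (hynn i)]
      have hby : b * y i = 0 := by nlinarith [mul_nonneg ha (hxnn i), mul_nonneg hb (hynn i)]
      simp [hτz, h, hax, hby]
    · simp only [hτz, if_neg h]
      field_simp
  refine ⟨hzH, τz, ⟨?_, ?_⟩, ?_⟩
  · intro α i
    by_cases h : z i = 0
    · simpa [hτz, h] using hτx.1 α i
    · have hzpos : 0 < z i := lt_of_le_of_ne (hznn i) (Ne.symm h)
      simp only [hτz, if_neg h]
      apply div_nonneg _ (le_of_lt hzpos)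
      have := hτx.1 α i; have := hτy.1 α i
      have := hxnn i; have := hynn i
      positivity
  · intro i
    by_cases h : z i = 0
    · simpa [hτz, h] using hτx.2 i
    · have hzpos : 0 < z i := lt_of_le_of_ne (hznn i) (Ne.symm h)
      simp only [hτz, if_neg h, ← Finset.sum_div]
      rw [div_eq_one_iff_eq (ne_of_gt hzpos)]
      rw [hzi]
      rw [Finset.sum_add_distrib]
      have e1 : ∑ α, a * x i * τx α i = a * x i := by
        rw [← Finset.mul_sum, hτx.2 i, mul_one]
      have e2 : ∑ α, b * y i * τy α i = b * y i := by
        rw [← Finset.mul_sum, hτy.2 i, mul_one]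
      rw [e1, e2]
  · funext j
    have hvx := congrFun hfx j
    have hvy := congrFun hfy j
    simp only [Matrix.vecMul, dotProduct, stratMatrix] at hvx hvy ⊢
    calc ∑ i, z i * ∑ α, τz α i * M α i j
        = ∑ i, ∑ α, (z i * τz α i) * M α i j := by
          exact Finset.sum_congr rfl fun i _ => by
            rw [Finset.mul_sum]; exact Finset.sum_congr rfl fun α _ => by ring
      _ = ∑ i, ∑ α, (a * x i * τx α i + b * y i * τy α i) * M α i j := by
          exact Finset.sum_congr rfl fun i _ => Finset.sum_congr rfl fun α _ => by
            rw [hkey]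
      _ = a * ∑ i, x i * ∑ α, τx α i * M α i j
          + b * ∑ i, y i * ∑ α, τy α i * M α i j := by
          rw [Finset.mul_sum, Finset.mul_sum, ← Finset.sum_add_distrib]
          refine Finset.sum_congr rfl fun i _ => ?_
          rw [Finset.mul_sum, Finset.mul_sum, Finset.mul_sum, Finset.mul_sum,
            ← Finset.sum_add_distrib]
          exact Finset.sum_congr rfl fun α _ => by ring
      _ = a * x j + b * y j := by rw [hvx, hvy]
      _ = z j := (hzi j).symm
end

section
/- Let A be an MDP with states s_1,…,s_n, actions α_1,…,α_k, t_i^j = e_i·M_{α_j}, and H a convex set of distributions. Then H = H_win if and only if: for all λ_1,…,λ_n ∈ [0,1], there exist μ_i^j ∈ [0,1] such that, if ∑_i λ_i e_i ∈ H, then ∑_j μ_i^j = λ_i for all i and ∑_{i,j} μ_i^j t_i^j ∈ H. -/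
open scoped BigOperators

private lemma sum_single_eq' {n : ℕ} (l : Fin n → ℝ) :
    (∑ i, l i • (Pi.single i 1 : Fin n → ℝ)) = l := by
  funext j
  rw [Finset.sum_apply]
  simp [Pi.single_apply]

private lemma hsafe_of_onestep' {n : ℕ} {A : Type} [Fintype A]
    (M : A → Matrix (Fin n) (Fin n) ℝ) (H : Set (Fin n → ℝ))
    (hstep : ∀ Δ ∈ H, ∃ τ : A → Fin n → ℝ, IsMDPStrategy τ ∧
      Matrix.vecMul Δ (stratMatrix M τ) ∈ H)
    {Δ : Fin n → ℝ} (hΔ : Δ ∈ H) : HSafe M H Δ := by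
  choose τ hτ hnext using hstep
  let seq : ℕ → {d : Fin n → ℝ // d ∈ H} := fun m =>
    Nat.rec ⟨Δ, hΔ⟩
      (fun _ p => ⟨Matrix.vecMul p.1 (stratMatrix M (τ p.1 p.2)), hnext p.1 p.2⟩) m
  let σ : ℕ → A → Fin n → ℝ := fun m => τ (seq m).1 (seq m).2
  have hiter : ∀ m, iterDist M σ Δ m = (seq m).1 := by
    intro m
    induction m with
    | zero => rfl
    | succ m ih => simp only [iterDist, ih]; rfl
  exact ⟨σ, fun m => hτ _ _, fun m => by rw [hiter m]; exact (seq m).2⟩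

theorem stmt15 {n : ℕ} {A : Type} [Fintype A]
    (M : A → Matrix (Fin n) (Fin n) ℝ) (hM : ∀ α, RowStochastic (M α))
    (H : Set (Fin n → ℝ)) (hconv : Convex ℝ H) (hHd : ∀ Δ ∈ H, IsDist Δ) :
    H = Hwin M H ↔
      ∀ l : Fin n → ℝ, (∀ i, l i ∈ Set.Icc (0:ℝ) 1) →
        ∃ μ : A → Fin n → ℝ, (∀ j i, μ j i ∈ Set.Icc (0:ℝ) 1) ∧
          ((∑ i, l i • (Pi.single i 1 : Fin n → ℝ)) ∈ H →
            (∀ i, ∑ j, μ j i = l i) ∧ (∑ i, ∑ j, μ j i • (M j i)) ∈ H) := by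
  constructor
  · -- forward direction
    intro hHw l hl
    by_cases hmem : (∑ i, l i • (Pi.single i 1 : Fin n → ℝ)) ∈ H
    · have hlH : l ∈ H := by rwa [sum_single_eq'] at hmem
      have hlw : l ∈ Hwin M H := hHw ▸ hlH
      obtain ⟨-, σ, hσ, hsafe⟩ := hlw
      have hτ := hσ 0
      refine ⟨fun α i => l i * σ 0 α i, ?_, fun _ => ⟨?_, ?_⟩⟩
      · intro α i
        have hle1 : σ 0 α i ≤ 1 := by
          have := Finset.single_le_sum (f := fun α => σ 0 α i)
            (fun α _ => hτ.1 α i) (Finset.mem_univ α)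
          rw [hτ.2 i] at this
          exact this
        exact ⟨mul_nonneg (hl i).1 (hτ.1 α i),
          mul_le_one₀ (hl i).2 (hτ.1 α i) hle1⟩
      · intro i
        rw [← Finset.mul_sum, hτ.2 i, mul_one]
      · have h1 := hsafe 1
        have heq : iterDist M σ l 1 = ∑ i, ∑ j, (l i * σ 0 j i) • (M j i) := by
          funext jj
          show Matrix.vecMul (iterDist M σ l 0) (stratMatrix M (σ 0)) jj = _
          rw [Finset.sum_apply]
          simp only [iterDist, Matrix.vecMul, dotProduct, stratMatrix,
            Finset.sum_apply, Pi.smul_apply, smul_eq_mul, Finset.mul_sum]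
          exact Finset.sum_congr rfl fun i _ =>
            Finset.sum_congr rfl fun α _ => by ring
        show (∑ i, ∑ j, (l i * σ 0 j i) • (M j i)) ∈ H
        rw [← heq]
        exact h1
    · exact ⟨0, fun j i => ⟨le_refl 0, zero_le_one⟩, fun h => absurd h hmem⟩
  · -- backward direction
    intro hcond
    refine Set.Subset.antisymm ?_ (fun Δ hΔ => hΔ.1)
    intro Δ hΔ
    refine ⟨hΔ, hsafe_of_onestep' M H ?_ hΔ⟩
    clear hΔ Δ
    intro Δ hΔ
    have hd := hHd Δ hΔ
    have hl : ∀ i, Δ i ∈ Set.Icc (0:ℝ) 1 := by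
      intro i
      refine ⟨hd.1 i, ?_⟩
      have := Finset.single_le_sum (f := Δ) (fun j _ => hd.1 j) (Finset.mem_univ i)
      rw [hd.2] at this
      exact this
    obtain ⟨μ, hμb, hμ⟩ := hcond Δ hl
    have hmem : (∑ i, Δ i • (Pi.single i 1 : Fin n → ℝ)) ∈ H := by
      rwa [sum_single_eq']
    obtain ⟨hsum, hnext⟩ := hμ hmem
    classical
    have hA : Nonempty A := by
      by_contra h
      haveI : IsEmpty A := not_nonempty_iff.mp h
      have h0 : ∀ i, Δ i = 0 := fun i => by rw [← hsum i]; simp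
      have := hd.2
      simp [h0] at this
    obtain ⟨α₀⟩ := hA
    refine ⟨fun α i => if Δ i = 0 then (if α = α₀ then 1 else 0) else μ α i / Δ i,
      ⟨?_, ?_⟩, ?_⟩
    · intro α i
      dsimp only
      split_ifs
      · exact zero_le_one
      · exact le_refl (0:ℝ)
      · exact div_nonneg (hμb α i).1 (hd.1 i)
    · intro i
      by_cases hi : Δ i = 0
      · simp [hi, Finset.sum_ite_eq']
      · simp only [hi, if_false]
        rw [← Finset.sum_div, hsum i, div_self hi]
    · have hvec : Matrix.vecMul Δ
          (stratMatrix M (fun α i => if Δ i = 0 then (if α = α₀ then 1 else 0)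
            else μ α i / Δ i)) = ∑ i, ∑ j, μ j i • (M j i) := by
        funext jj
        rw [Finset.sum_apply]
        simp only [Matrix.vecMul, dotProduct, stratMatrix,
          Finset.sum_apply, Pi.smul_apply, smul_eq_mul]
        refine Finset.sum_congr rfl fun i _ => ?_
        by_cases hi : Δ i = 0
        · have hz : ∀ α, μ α i = 0 := by
            intro α
            have h0 := hsum i
            rw [hi] at h0
            exact (Finset.sum_eq_zero_iff_of_nonneg
              (fun α _ => (hμb α i).1)).mp h0 α (Finset.mem_univ α)
          simp [hi, hz]
        · simp only [hi, if_false, Finset.mul_sum]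
          refine Finset.sum_congr rfl fun α _ => ?_
          rw [show Δ i * (μ α i / Δ i * M α i jj)
            = (Δ i / Δ i) * (μ α i * M α i jj) by ring, div_self hi, one_mul]
      rw [hvec]
      exact hnext
end

section
/- There exists a PFA A with 4 states, 2 actions, and a closed convex polytope H (the segment from e_3 to e_4), together with x, y ∈ H and one-step PFA strategies τ_x, τ_y with x·M_{τ_x} ∈ H and y·M_{τ_y} ∈ H, such that for some z on the segment [x,y] no one-step PFA strategy τ satisfies z·M_τ ∈ H. -/
open scoped BigOperators

theorem stmt18 :
    ∃ (M : Fin 2 → Matrix (Fin 4) (Fin 4) ℝ) (H : Set (Fin 4 → ℝ))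
      (x y z : Fin 4 → ℝ) (τx τy : Fin 2 → ℝ),
      (∀ α, RowStochastic (M α)) ∧
      H = segment ℝ ((Pi.single 2 1 : Fin 4 → ℝ)) ((Pi.single 3 1 : Fin 4 → ℝ)) ∧
      IsClosed H ∧ Convex ℝ H ∧
      x ∈ H ∧ y ∈ H ∧
      IsPFAStrategy τx ∧ IsPFAStrategy τy ∧
      Matrix.vecMul x (pfaMatrix M τx) ∈ H ∧
      Matrix.vecMul y (pfaMatrix M τy) ∈ H ∧
      z ∈ segment ℝ x y ∧
      ∀ τ : Fin 2 → ℝ, IsPFAStrategy τ → Matrix.vecMul z (pfaMatrix M τ) ∉ H := by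
  classical
  refine ⟨![!![1,0,0,0; 0,1,0,0; 0,0,1,0; 1,0,0,0],
            !![1,0,0,0; 0,1,0,0; 0,1,0,0; 0,0,0,1]],
          segment ℝ ((Pi.single 2 1 : Fin 4 → ℝ)) ((Pi.single 3 1 : Fin 4 → ℝ)),
          (Pi.single 2 1 : Fin 4 → ℝ), (Pi.single 3 1 : Fin 4 → ℝ),
          (1/2 : ℝ) • (Pi.single 2 1 : Fin 4 → ℝ) + (1/2 : ℝ) • (Pi.single 3 1 : Fin 4 → ℝ),
          ![1,0], ![0,1], ?_, rfl, ?_, convex_segment _ _,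
          left_mem_segment _ _ _, right_mem_segment _ _ _, ?_, ?_, ?_, ?_, ?_, ?_⟩
  · intro α
    fin_cases α <;> constructor <;> intro i <;> fin_cases i <;>
      simp [Fin.sum_univ_four] <;> (intro j; fin_cases j <;> simp)
  · rw [segment_eq_image]
    exact (isCompact_Icc.image (by fun_prop)).isClosed
  · exact ⟨fun α => by fin_cases α <;> norm_num, by simp [Fin.sum_univ_two]⟩
  · exact ⟨fun α => by fin_cases α <;> norm_num, by simp [Fin.sum_univ_two]⟩
  · convert left_mem_segment ℝ (Pi.single 2 1 : Fin 4 → ℝ) (Pi.single 3 1 : Fin 4 → ℝ) using 1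
    funext j
    simp [Matrix.vecMul, dotProduct, pfaMatrix, Fin.sum_univ_four, Fin.sum_univ_two,
      Pi.single_apply, Matrix.vecHead, Matrix.vecTail]
    fin_cases j <;> simp
  · convert right_mem_segment ℝ (Pi.single 2 1 : Fin 4 → ℝ) (Pi.single 3 1 : Fin 4 → ℝ) using 1
    funext j
    simp [Matrix.vecMul, dotProduct, pfaMatrix, Fin.sum_univ_four, Fin.sum_univ_two,
      Pi.single_apply, Matrix.vecHead, Matrix.vecTail]
    fin_cases j <;> simp
  · exact ⟨1/2, 1/2, by norm_num, by norm_num, by norm_num, rfl⟩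
  · rintro τ ⟨hτ0, hτ1⟩ hmem
    rw [segment_eq_image] at hmem
    obtain ⟨t, ht, heq⟩ := hmem
    have h0 := congrFun heq 0
    have h1 := congrFun heq 1
    have hsum : τ 0 + τ 1 = 1 := by simpa [Fin.sum_univ_two] using hτ1
    simp [Matrix.vecMul, dotProduct, pfaMatrix, Fin.sum_univ_four, Fin.sum_univ_two,
      Pi.single_apply, Matrix.vecHead, Matrix.vecTail] at h0 h1
    linarith
end

section
/- Let A be an MDP and H the convex hull of finitely many distributions Γ_1,…,Γ_r (V-representation). Then H = H_win if and only if for every corner point Γ_ℓ (ℓ = 1,…,r) there exists a one-step MDP strategy τ with Γ_ℓ·M_τ ∈ H. -/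
open scoped BigOperators

lemma hwin_step {n : ℕ} {A : Type} [Fintype A]
    (M : A → Matrix (Fin n) (Fin n) ℝ)
    (r : ℕ) (Γ : Fin r → Fin n → ℝ) (hΓ : ∀ ℓ, IsDist (Γ ℓ))
    (H : Set (Fin n → ℝ)) (hH : H = convexHull ℝ (Set.range Γ))
    (hyp : ∀ ℓ : Fin r, ∃ τ : A → Fin n → ℝ, IsMDPStrategy τ ∧
        Matrix.vecMul (Γ ℓ) (stratMatrix M τ) ∈ H) :
    ∀ Δ ∈ H, ∃ τ : A → Fin n → ℝ, IsMDPStrategy τ ∧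
        Matrix.vecMul Δ (stratMatrix M τ) ∈ H := by
  classical
  have hDist : ∀ Δ ∈ H, IsDist Δ := by
    intro Δ hΔ
    rw [hH] at hΔ
    have hsub : convexHull ℝ (Set.range Γ) ⊆ stdSimplex ℝ (Fin n) := by
      apply convexHull_min _ (convex_stdSimplex ℝ (Fin n))
      rintro _ ⟨ℓ, rfl⟩
      exact ⟨(hΓ ℓ).1, (hΓ ℓ).2⟩
    exact ⟨(hsub hΔ).1, (hsub hΔ).2⟩
  set S : Set (Fin n → ℝ) :=
    {Δ | Δ ∈ H ∧ ∃ τ : A → Fin n → ℝ, IsMDPStrategy τ ∧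
      Matrix.vecMul Δ (stratMatrix M τ) ∈ H} with hS
  have hHconv : Convex ℝ H := hH ▸ convex_convexHull ℝ _
  have hSconv : Convex ℝ S := by
    rintro x ⟨hxH, τx, hτx, hvx⟩ y ⟨hyH, τy, hτy, hvy⟩ a b ha hb hab
    have hx0 := (hDist x hxH).1
    have hy0 := (hDist y hyH).1
    refine ⟨hHconv hxH hyH ha hb hab, ?_⟩
    set z : Fin n → ℝ := a • x + b • y with hz
    set τ : A → Fin n → ℝ := fun α i =>
      if z i = 0 then τx α i
      else (a * x i * τx α i + b * y i * τy α i) / z i with hτ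
    have hzi : ∀ i, z i = a * x i + b * y i := fun i => rfl
    have hz0 : ∀ i, z i = 0 → a * x i = 0 ∧ b * y i = 0 := by
      intro i h
      rw [hzi i] at h
      have h1 : 0 ≤ a * x i := mul_nonneg ha (hx0 i)
      have h2 : 0 ≤ b * y i := mul_nonneg hb (hy0 i)
      constructor <;> linarith
    have hτstrat : IsMDPStrategy τ := by
      constructor
      · intro α i
        by_cases h : z i = 0
        · simp only [hτ, if_pos h]
          exact hτx.1 α i
        · simp only [hτ, if_neg h]
          have hzpos : 0 ≤ z i := by
            rw [hzi i]
            exact add_nonneg (mul_nonneg ha (hx0 i)) (mul_nonneg hb (hy0 i))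
          exact div_nonneg (add_nonneg
            (mul_nonneg (mul_nonneg ha (hx0 i)) (hτx.1 α i))
            (mul_nonneg (mul_nonneg hb (hy0 i)) (hτy.1 α i))) hzpos
      · intro i
        by_cases h : z i = 0
        · simp only [hτ, if_pos h]
          exact hτx.2 i
        · simp only [hτ, if_neg h]
          rw [← Finset.sum_div, div_eq_one_iff_eq h, Finset.sum_add_distrib,
            ← Finset.mul_sum, ← Finset.mul_sum, hτx.2 i, hτy.2 i, mul_one, mul_one,
            hzi i]
    have key : ∀ i j, z i * stratMatrix M τ i j
        = a * x i * stratMatrix M τx i j + b * y i * stratMatrix M τy i j := by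
      intro i j
      by_cases h : z i = 0
      · rcases hz0 i h with ⟨h1, h2⟩
        simp [h, h1, h2]
      · simp only [stratMatrix, hτ, if_neg h]
        rw [Finset.mul_sum, Finset.mul_sum, Finset.mul_sum, ← Finset.sum_add_distrib]
        apply Finset.sum_congr rfl
        intro α _
        field_simp
    have hvec : Matrix.vecMul z (stratMatrix M τ)
        = a • Matrix.vecMul x (stratMatrix M τx) + b • Matrix.vecMul y (stratMatrix M τy) := by
      funext j
      simp only [Matrix.vecMul, dotProduct, Pi.add_apply, Pi.smul_apply, smul_eq_mul,
        Finset.mul_sum, ← Finset.sum_add_distrib]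
      apply Finset.sum_congr rfl
      intro i _
      have hk := key i j
      nlinarith [hk]
    exact ⟨τ, hτstrat, by rw [hvec]; exact hHconv hvx hvy ha hb hab⟩
  have hsub : H ⊆ S := by
    rw [hH]
    apply convexHull_min _ hSconv
    rintro _ ⟨ℓ, rfl⟩
    exact ⟨hH ▸ subset_convexHull ℝ _ (Set.mem_range_self ℓ), hyp ℓ⟩
  intro Δ hΔ
  exact (hsub hΔ).2

theorem stmt19 {n : ℕ} {A : Type} [Fintype A]
    (M : A → Matrix (Fin n) (Fin n) ℝ) (hM : ∀ α, RowStochastic (M α))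
    (r : ℕ) (Γ : Fin r → Fin n → ℝ) (hΓ : ∀ ℓ, IsDist (Γ ℓ))
    (H : Set (Fin n → ℝ)) (hH : H = convexHull ℝ (Set.range Γ)) :
    H = Hwin M H ↔
      ∀ ℓ : Fin r, ∃ τ : A → Fin n → ℝ, IsMDPStrategy τ ∧
        Matrix.vecMul (Γ ℓ) (stratMatrix M τ) ∈ H := by
  classical
  constructor
  · intro hEq ℓ
    have hΓH : Γ ℓ ∈ H := hH ▸ subset_convexHull ℝ _ (Set.mem_range_self ℓ)
    have hwin : Γ ℓ ∈ Hwin M H := hEq ▸ hΓH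
    obtain ⟨-, σ, hσ, hmem⟩ := hwin
    refine ⟨σ 0, hσ 0, ?_⟩
    have h1 := hmem 1
    simpa [iterDist] using h1
  · intro hyp
    have hstep := hwin_step M r Γ hΓ H hH hyp
    apply Set.Subset.antisymm
    · intro Δ hΔ
      refine ⟨hΔ, ?_⟩
      let D : ℕ → {x : Fin n → ℝ // x ∈ H} := fun m =>
        Nat.rec ⟨Δ, hΔ⟩ (fun _ p =>
          ⟨Matrix.vecMul p.1 (stratMatrix M (Classical.choose (hstep p.1 p.2))),
           (Classical.choose_spec (hstep p.1 p.2)).2⟩) m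
      let σ : ℕ → A → Fin n → ℝ := fun m => Classical.choose (hstep (D m).1 (D m).2)
      have hDsucc : ∀ m, (D (m+1)).1 = Matrix.vecMul (D m).1 (stratMatrix M (σ m)) :=
        fun m => rfl
      have hiter : ∀ m, iterDist M σ Δ m = (D m).1 := by
        intro m
        induction m with
        | zero => rfl
        | succ k ih =>
          show Matrix.vecMul (iterDist M σ Δ k) (stratMatrix M (σ k)) = _
          rw [ih, hDsucc]
      exact ⟨σ, fun m => (Classical.choose_spec (hstep (D m).1 (D m).2)).1,
        fun m => (hiter m) ▸ (D m).2⟩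
    · intro Δ hΔ
      exact hΔ.1
end
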